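/- On the universal cover ℝ² of the flat torus with strong Kropina metric of navigation data (flat metric, W = (1/√2, 1/√2)), for any point (u,v) with u + v > 0 the F-length of the Kropina geodesic from (0,0) to (u,v) equals (u² + v²) / (√2 (u+v)). -/

import Mathlib

/-- On the universal cover `ℝ²` of the flat torus with strong Kropina metric
of navigation data (flat metric, `W = (1/√2, 1/√2)`), the `F`-geodesics from the origin are
`P(t) = t • (a + W)` with `‖a‖ = 1`, `a ≠ -W`, parametrized by `F`-arclength.  If such a
geodesic reaches the point `q = (u,v)` with `u + v > 0` at parameter `t > 0`, then the
`F`-length of the geodesic is `t = (u² + v²)/(√2 (u + v))`. -/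
theorem torus_cover_kropina_length
    (W q : EuclideanSpace ℝ (Fin 2))
    (hW0 : W 0 = 1 / Real.sqrt 2) (hW1 : W 1 = 1 / Real.sqrt 2)
    (hq : 0 < q 0 + q 1)
    (a : EuclideanSpace ℝ (Fin 2)) (ha : ‖a‖ = 1) (hna : a ≠ -W)
    (t : ℝ) (ht : 0 < t) (hreach : t • (a + W) = q) :
    t = (q 0 ^ 2 + q 1 ^ 2) / (Real.sqrt 2 * (q 0 + q 1)) := by
  have hs2 : Real.sqrt 2 ^ 2 = 2 := Real.sq_sqrt (by norm_num)
  have hs2pos : 0 < Real.sqrt 2 := Real.sqrt_pos.mpr (by norm_num)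
  have h0 : q 0 = t * (a 0 + W 0) := by
    rw [← hreach]; simp [PiLp.smul_apply, PiLp.add_apply, mul_add]
  have h1 : q 1 = t * (a 1 + W 1) := by
    rw [← hreach]; simp [PiLp.smul_apply, PiLp.add_apply, mul_add]
  have hnorm : a 0 ^ 2 + a 1 ^ 2 = 1 := by
    have := ha
    rw [EuclideanSpace.norm_eq] at this
    have h : Real.sqrt (a 0 ^ 2 + a 1 ^ 2) = 1 := by
      rw [Fin.sum_univ_two] at this
      simpa [sq_abs, sq] using this
    nlinarith [Real.sq_sqrt (by positivity : (0:ℝ) ≤ a 0 ^ 2 + a 1 ^ 2),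
      Real.sqrt_nonneg (a 0 ^ 2 + a 1 ^ 2)]
  set s := Real.sqrt 2 with hs
  rw [hW0] at h0; rw [hW1] at h1
  have h2s : (1:ℝ)/s + 1/s = s := by
    rw [← add_div, div_eq_iff hs2pos.ne']
    nlinarith
  have hsum : q 0 + q 1 = t * (a 0 + a 1 + s) := by
    linear_combination h0 + h1 + t * h2s
  have hA : 0 < a 0 + a 1 + s := by
    by_contra hc
    push_neg at hc
    have : q 0 + q 1 ≤ 0 := by
      rw [hsum]; exact mul_nonpos_of_nonneg_of_nonpos ht.le hc
    linarith
  have hden : 0 < s * (a 0 + a 1) + 2 := by nlinarith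
  have hnum : q 0 ^ 2 + q 1 ^ 2 = t ^ 2 * (s * (a 0 + a 1) + 2) := by
    rw [h0, h1]
    field_simp
    linear_combination s^2 * hnorm - (1 + s*(a 0 + a 1)) * hs2
  have hden' : s * (q 0 + q 1) = t * (s * (a 0 + a 1) + 2) := by
    linear_combination s * hsum + t * hs2
  have hne : t * (s * (a 0 + a 1) + 2) ≠ 0 := by positivity
  rw [hnum, hden', sq, mul_assoc, mul_div_assoc, div_self hne, mul_one]
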